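/- Let (X,r) and (Y,s) be finite left nondegenerate idempotent braided sets. The free monoid homomorphism on X×Y sending each generator (x,y) to ([x],[y]) induces a well-defined monoid homomorphism 𝔰 : S(X×Y, r*s) → S(X,r) × S(Y,s), and 𝔰 is injective with image exactly {(u,v) ∈ S(X,r) × S(Y,s) : ℓ(u) = ℓ(v)}. Consequently, for every field k, the Segre product A(k,X,r) ∘ A(k,Y,s) (the subalgebra ⊕_{m≥0} A_m ⊗ B_m of A(k,X,r) ⊗ A(k,Y,s)) is isomorphic as a graded algebra to A(k, X×Y, r*s). -/

import Mathlib

open TensorProduct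

/-- `r` applied to the first two factors of `X × X × X`. -/
def rOneMap {X : Type*} (r : X × X → X × X) : X × X × X → X × X × X :=
  fun p => ((r (p.1, p.2.1)).1, (r (p.1, p.2.1)).2, p.2.2)

/-- `r` applied to the last two factors of `X × X × X`. -/
def rTwoMap {X : Type*} (r : X × X → X × X) : X × X × X → X × X × X :=
  fun p => (p.1, (r (p.2.1, p.2.2)).1, (r (p.2.1, p.2.2)).2)

/-- `(X, r)` is a braided set (set-theoretic solution of the Yang–Baxter equation). -/
def IsBraided {X : Type*} (r : X × X → X × X) : Prop :=
  rOneMap r ∘ rTwoMap r ∘ rOneMap r = rTwoMap r ∘ rOneMap r ∘ rTwoMap r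

/-- The defining relations of the Yang–Baxter monoid: `xy ~ x'y'` whenever
`r (x, y) = (x', y')`. -/
def ybRel {X : Type*} (r : X × X → X × X) : FreeMonoid X → FreeMonoid X → Prop :=
  fun a b => ∃ x y : X,
    a = FreeMonoid.of x * FreeMonoid.of y ∧
    b = FreeMonoid.of (r (x, y)).1 * FreeMonoid.of (r (x, y)).2

/-- The congruence on the free monoid on `X` generated by the Yang–Baxter relations;
the Yang–Baxter monoid `S(X, r)` is its quotient. -/
def ybCon {X : Type*} (r : X × X → X × X) : Con (FreeMonoid X) := conGen (ybRel r)

/-- The cartesian product solution `(X × Y, r * s)` of quadratic sets `(X, r)` and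
`(Y, s)`. -/
def prodSol {X Y : Type*} (r : X × X → X × X) (s : Y × Y → Y × Y) :
    (X × Y) × (X × Y) → (X × Y) × (X × Y) :=
  fun p => (((r (p.1.1, p.2.1)).1, (s (p.1.2, p.2.2)).1),
            ((r (p.1.1, p.2.1)).2, (s (p.1.2, p.2.2)).2))

namespace Stmt18

variable {X Y : Type*}

def sIns (r : X × X → X × X) : X → List X → List X
  | x, [] => [x]
  | x, y :: v => (r (x, y)).1 :: sIns r (r (x, y)).2 v

def sNf (r : X × X → X × X) : List X → List X := List.foldr (sIns r) []

def sInsAll (r : X × X → X × X) (u w : List X) : List X := List.foldr (sIns r) w u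

variable {r : X × X → X × X}

lemma rr (hir : r ∘ r = r) (x y : X) :
    r ((r (x, y)).1, (r (x, y)).2) = r (x, y) := by
  have := congrFun hir (x, y)
  simpa [Function.comp] using this

lemma sIns_sIns (hbr : IsBraided r) (hir : r ∘ r = r) :
    ∀ (v : List X) (x y : X),
      sIns r (r (x, y)).1 (sIns r (r (x, y)).2 v) = sIns r x (sIns r y v) := by
  intro v
  induction v with
  | nil =>
    intro x y
    simp only [sIns, rr hir]
  | cons z v ih =>
    intro x y
    have h := congrFun hbr (x, y, z)
    simp only [Function.comp_apply, rOneMap, rTwoMap, Prod.mk.injEq] at h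
    obtain ⟨h1, h2, h3⟩ := h
    simp only [sIns]
    rw [h1, h2, h3, ih]

lemma sInsAll_sIns (hbr : IsBraided r) (hir : r ∘ r = r) :
    ∀ (v : List X) (x : X) (w : List X),
      sInsAll r (sIns r x v) w = sIns r x (sInsAll r v w) := by
  intro v
  induction v with
  | nil => intro x w; rfl
  | cons y v ih =>
    intro x w
    simp only [sIns, sInsAll, List.foldr_cons]
    rw [show List.foldr (sIns r) w (sIns r (r (x,y)).2 v) = sInsAll r (sIns r (r (x,y)).2 v) w from rfl,
      ih, sIns_sIns hbr hir]
    rfl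

lemma sInsAll_sNf (hbr : IsBraided r) (hir : r ∘ r = r) :
    ∀ (u w : List X), sInsAll r (sNf r u) w = sInsAll r u w := by
  intro u
  induction u with
  | nil => intro w; rfl
  | cons x u ih =>
    intro w
    show sInsAll r (sIns r x (sNf r u)) w = sIns r x (sInsAll r u w)
    rw [sInsAll_sIns hbr hir, ih]

lemma sNf_append (u v : List X) : sNf r (u ++ v) = sInsAll r u (sNf r v) :=
  List.foldr_append ..

lemma sNf_mul (hbr : IsBraided r) (hir : r ∘ r = r) {a b c d : List X}
    (h1 : sNf r a = sNf r b) (h2 : sNf r c = sNf r d) :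
    sNf r (a ++ c) = sNf r (b ++ d) := by
  rw [sNf_append, sNf_append, ← sInsAll_sNf hbr hir a, ← sInsAll_sNf hbr hir b, h1, h2]

lemma sIns_length (x : X) (v : List X) : (sIns r x v).length = v.length + 1 := by
  induction v generalizing x with
  | nil => rfl
  | cons y v ih => simp [sIns, ih]

lemma sNf_length (u : List X) : (sNf r u).length = u.length := by
  induction u with
  | nil => rfl
  | cons x u ih => show (sIns r x (sNf r u)).length = _; rw [sIns_length, ih]; rfl

/-- The congruence "same normal form". -/
def nfCon (r : X × X → X × X) (hbr : IsBraided r) (hir : r ∘ r = r) :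
    Con (FreeMonoid X) where
  r := fun a b => sNf r a.toList = sNf r b.toList
  iseqv := ⟨fun _ => rfl, Eq.symm, Eq.trans⟩
  mul' := fun h1 h2 => by
    simpa only [FreeMonoid.toList_mul] using sNf_mul hbr hir h1 h2

lemma ybCon_le_nfCon (hbr : IsBraided r) (hir : r ∘ r = r) :
    ybCon r ≤ nfCon r hbr hir := by
  apply Con.conGen_le.2
  rintro a b ⟨x, y, rfl, rfl⟩
  show sNf r _ = sNf r _
  simp only [FreeMonoid.toList_mul, FreeMonoid.toList_of]
  show sIns r x (sIns r y []) = sIns r (r (x,y)).1 (sIns r (r (x,y)).2 [])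
  simp only [sIns, rr hir]

lemma rel_sIns : ∀ (v : List X) (x : X),
    ybCon r (FreeMonoid.ofList (x :: v)) (FreeMonoid.ofList (sIns r x v)) := by
  intro v
  induction v with
  | nil => intro x; exact (ybCon r).refl _
  | cons y v ih =>
    intro x
    have h1 : ybCon r (FreeMonoid.of x * FreeMonoid.of y)
        (FreeMonoid.of (r (x, y)).1 * FreeMonoid.of (r (x, y)).2) :=
      ConGen.Rel.of _ _ ⟨x, y, rfl, rfl⟩
    have h2 := (ybCon r).mul h1 ((ybCon r).refl (FreeMonoid.ofList v))
    have h3 := (ybCon r).mul ((ybCon r).refl (FreeMonoid.of (r (x, y)).1))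
      (ih (r (x, y)).2)
    refine (ybCon r).trans ?_ ((ybCon r).trans h2 ?_)
    · rw [FreeMonoid.ofList_cons, FreeMonoid.ofList_cons, mul_assoc]
      exact (ybCon r).refl _
    · show ybCon r _ (FreeMonoid.ofList ((r (x,y)).1 :: sIns r (r (x,y)).2 v))
      rw [FreeMonoid.ofList_cons, mul_assoc]
      rw [FreeMonoid.ofList_cons] at h3
      exact h3

lemma rel_sNf : ∀ (l : List X),
    ybCon r (FreeMonoid.ofList l) (FreeMonoid.ofList (sNf r l)) := by
  intro l
  induction l with
  | nil => exact (ybCon r).refl _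
  | cons x l ih =>
    have h1 := (ybCon r).mul ((ybCon r).refl (FreeMonoid.of x)) ih
    rw [← FreeMonoid.ofList_cons, ← FreeMonoid.ofList_cons] at h1
    exact (ybCon r).trans h1 (rel_sIns (sNf r l) x)

lemma mk'_eq_iff (hbr : IsBraided r) (hir : r ∘ r = r) (a b : List X) :
    (ybCon r).mk' (FreeMonoid.ofList a) = (ybCon r).mk' (FreeMonoid.ofList b) ↔
      sNf r a = sNf r b := by
  constructor
  · intro h
    have hc : ybCon r (FreeMonoid.ofList a) (FreeMonoid.ofList b) := (Con.eq _).1 h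
    have := ybCon_le_nfCon hbr hir hc
    simpa [nfCon, FreeMonoid.toList_ofList] using this
  · intro h
    apply (Con.eq _).2
    refine (ybCon r).trans (rel_sNf a) ?_
    rw [h]
    exact (ybCon r).symm (rel_sNf b)

variable {s : Y × Y → Y × Y}

lemma prod_braided (hbr : IsBraided r) (hbs : IsBraided s) :
    IsBraided (prodSol r s) := by
  funext p
  obtain ⟨⟨x, a⟩, ⟨y, b⟩, ⟨z, c⟩⟩ := p
  have hX := congrFun hbr (x, y, z)
  have hY := congrFun hbs (a, b, c)
  simp only [Function.comp_apply, rOneMap, rTwoMap, prodSol, Prod.mk.injEq] at hX hY ⊢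
  obtain ⟨hX1, hX2, hX3⟩ := hX
  obtain ⟨hY1, hY2, hY3⟩ := hY
  exact ⟨⟨hX1, hY1⟩, ⟨hX2, hY2⟩, hX3, hY3⟩

lemma prod_idem (hir : r ∘ r = r) (his : s ∘ s = s) :
    prodSol r s ∘ prodSol r s = prodSol r s := by
  funext p
  obtain ⟨⟨x, a⟩, ⟨y, b⟩⟩ := p
  have hX : r ((r (x, y)).1, (r (x, y)).2) = r (x, y) := by
    simpa using congrFun hir (x, y)
  have hY : s ((s (a, b)).1, (s (a, b)).2) = s (a, b) := by
    simpa using congrFun his (a, b)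
  simp only [Function.comp_apply, prodSol, hX, hY]

lemma sIns_prod_fst : ∀ (v : List (X × Y)) (p : X × Y),
    (sIns (prodSol r s) p v).map Prod.fst = sIns r p.1 (v.map Prod.fst) := by
  intro v
  induction v with
  | nil => intro p; rfl
  | cons q v ih =>
    intro p
    simp only [sIns, prodSol, List.map_cons, ih]

lemma sIns_prod_snd : ∀ (v : List (X × Y)) (p : X × Y),
    (sIns (prodSol r s) p v).map Prod.snd = sIns s p.2 (v.map Prod.snd) := by
  intro v
  induction v with
  | nil => intro p; rfl
  | cons q v ih =>
    intro p
    simp only [sIns, prodSol, List.map_cons, ih]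

lemma sNf_prod_fst : ∀ (w : List (X × Y)),
    (sNf (prodSol r s) w).map Prod.fst = sNf r (w.map Prod.fst) := by
  intro w
  induction w with
  | nil => rfl
  | cons p w ih =>
    show (sIns (prodSol r s) p (sNf (prodSol r s) w)).map Prod.fst = _
    rw [sIns_prod_fst, ih]
    rfl

lemma sNf_prod_snd : ∀ (w : List (X × Y)),
    (sNf (prodSol r s) w).map Prod.snd = sNf s (w.map Prod.snd) := by
  intro w
  induction w with
  | nil => rfl
  | cons p w ih =>
    show (sIns (prodSol r s) p (sNf (prodSol r s) w)).map Prod.snd = _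
    rw [sIns_prod_snd, ih]
    rfl

lemma eq_of_proj : ∀ (l₁ l₂ : List (X × Y)),
    l₁.map Prod.fst = l₂.map Prod.fst → l₁.map Prod.snd = l₂.map Prod.snd →
    l₁ = l₂ := by
  intro l₁
  induction l₁ with
  | nil => intro l₂ h _; cases l₂ <;> simp_all
  | cons p l₁ ih =>
    intro l₂ h1 h2
    cases l₂ with
    | nil => simp at h1
    | cons q l₂ =>
      simp only [List.map_cons, List.cons.injEq] at h1 h2
      have : p = q := Prod.ext h1.1 h2.1
      rw [this, ih l₂ h1.2 h2.2]

/-- The homomorphism from the free monoid on `X × Y`. -/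
def segF (r : X × X → X × X) (s : Y × Y → Y × Y) :
    FreeMonoid (X × Y) →* (ybCon r).Quotient × (ybCon s).Quotient :=
  FreeMonoid.lift fun p =>
    ((ybCon r).mk' (FreeMonoid.of p.1), (ybCon s).mk' (FreeMonoid.of p.2))

lemma segF_apply : ∀ l : List (X × Y),
    segF r s (FreeMonoid.ofList l) =
      ((ybCon r).mk' (FreeMonoid.ofList (l.map Prod.fst)),
       (ybCon s).mk' (FreeMonoid.ofList (l.map Prod.snd))) := by
  intro l
  induction l with
  | nil =>
    show segF r s 1 = _
    rw [map_one]
    rfl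
  | cons p l ih =>
    rw [FreeMonoid.ofList_cons, map_mul, ih]
    show (segF r s) (FreeMonoid.of p) * _ = _
    rw [show (segF r s) (FreeMonoid.of p) =
        ((ybCon r).mk' (FreeMonoid.of p.1), (ybCon s).mk' (FreeMonoid.of p.2)) from
      FreeMonoid.lift_eval_of _ _]
    refine Prod.ext ?_ ?_ <;>
      simp [List.map_cons, FreeMonoid.ofList_cons, map_mul]

lemma rel_mk'_eq (x y : X) :
    (ybCon r).mk' (FreeMonoid.of x * FreeMonoid.of y) =
      (ybCon r).mk' (FreeMonoid.of (r (x, y)).1 * FreeMonoid.of (r (x, y)).2) :=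
  (Con.eq _).2 (ConGen.Rel.of _ _ ⟨x, y, rfl, rfl⟩)

lemma segF_ker : ybCon (prodSol r s) ≤ Con.ker (segF r s) := by
  apply Con.conGen_le.2
  rintro a b ⟨p, q, rfl, rfl⟩
  show segF r s _ = segF r s _
  rw [map_mul, map_mul]
  rw [show ∀ u : X × Y, (segF r s) (FreeMonoid.of u) =
      ((ybCon r).mk' (FreeMonoid.of u.1), (ybCon s).mk' (FreeMonoid.of u.2)) from
    fun u => FreeMonoid.lift_eval_of _ _]
  refine Prod.ext ?_ ?_
  · show (ybCon r).mk' _ * (ybCon r).mk' _ = (ybCon r).mk' _ * (ybCon r).mk' _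
    rw [← map_mul, ← map_mul]
    exact rel_mk'_eq p.1 q.1
  · show (ybCon s).mk' _ * (ybCon s).mk' _ = (ybCon s).mk' _ * (ybCon s).mk' _
    rw [← map_mul, ← map_mul]
    exact rel_mk'_eq p.2 q.2

/-- The Segre monoid homomorphism. -/
def seg (r : X × X → X × X) (s : Y × Y → Y × Y) :
    (ybCon (prodSol r s)).Quotient →* (ybCon r).Quotient × (ybCon s).Quotient :=
  Con.lift _ (segF r s) segF_ker

lemma seg_mk' (l : List (X × Y)) :
    seg r s ((ybCon (prodSol r s)).mk' (FreeMonoid.ofList l)) =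
      ((ybCon r).mk' (FreeMonoid.ofList (l.map Prod.fst)),
       (ybCon s).mk' (FreeMonoid.ofList (l.map Prod.snd))) := by
  rw [← segF_apply]
  rfl

lemma seg_injective (hbr : IsBraided r) (hbs : IsBraided s)
    (hir : r ∘ r = r) (his : s ∘ s = s) :
    Function.Injective (seg r s) := by
  intro u v h
  obtain ⟨w, rfl⟩ := Con.mk'_surjective u
  obtain ⟨w', rfl⟩ := Con.mk'_surjective v
  have hw : w = FreeMonoid.ofList w.toList := rfl
  have hw' : w' = FreeMonoid.ofList w'.toList := rfl
  rw [hw, hw', seg_mk', seg_mk', Prod.mk.injEq] at h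
  rw [mk'_eq_iff hbr hir] at *
  rw [hw, hw', mk'_eq_iff (prod_braided hbr hbs) (prod_idem hir his)]
  obtain ⟨h1, h2⟩ := h
  rw [mk'_eq_iff hbs his] at h2
  refine eq_of_proj _ _ ?_ ?_
  · rw [sNf_prod_fst, sNf_prod_fst, h1]
  · rw [sNf_prod_snd, sNf_prod_snd, h2]

lemma length_mk' (ℓ : (ybCon r).Quotient → ℕ)
    (hone : ∀ x : X, ℓ ((ybCon r).mk' (FreeMonoid.of x)) = 1)
    (hmul : ∀ a b, ℓ (a * b) = ℓ a + ℓ b) :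
    ∀ l : List X, ℓ ((ybCon r).mk' (FreeMonoid.ofList l)) = l.length := by
  have h1 : ℓ 1 = 0 := by have := hmul 1 1; simp at this; omega
  intro l
  induction l with
  | nil => simpa using h1
  | cons x l ih =>
    rw [FreeMonoid.ofList_cons, map_mul, hmul, hone, ih]
    simp [Nat.add_comm]

lemma seg_range (hbr : IsBraided r) (hbs : IsBraided s)
    (hir : r ∘ r = r) (his : s ∘ s = s)
    (ℓX : (ybCon r).Quotient → ℕ)
    (hXone : ∀ x : X, ℓX ((ybCon r).mk' (FreeMonoid.of x)) = 1)
    (hXmul : ∀ a b, ℓX (a * b) = ℓX a + ℓX b)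
    (ℓY : (ybCon s).Quotient → ℕ)
    (hYone : ∀ y : Y, ℓY ((ybCon s).mk' (FreeMonoid.of y)) = 1)
    (hYmul : ∀ a b, ℓY (a * b) = ℓY a + ℓY b) :
    Set.range (seg r s) = {p | ℓX p.1 = ℓY p.2} := by
  ext p
  constructor
  · rintro ⟨q, rfl⟩
    obtain ⟨w, rfl⟩ := Con.mk'_surjective q
    have hw : w = FreeMonoid.ofList w.toList := rfl
    rw [hw, seg_mk']
    show ℓX _ = ℓY _
    rw [length_mk' ℓX hXone hXmul, length_mk' ℓY hYone hYmul]
    simp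
  · obtain ⟨u, v⟩ := p
    intro hp
    obtain ⟨a, rfl⟩ := Con.mk'_surjective u
    obtain ⟨b, rfl⟩ := Con.mk'_surjective v
    have ha : a = FreeMonoid.ofList a.toList := rfl
    have hb : b = FreeMonoid.ofList b.toList := rfl
    have hp' : ℓX ((ybCon r).mk' a) = ℓY ((ybCon s).mk' b) := hp
    rw [ha, hb, length_mk' ℓX hXone hXmul, length_mk' ℓY hYone hYmul] at hp'
    refine ⟨(ybCon (prodSol r s)).mk'
      (FreeMonoid.ofList (a.toList.zip b.toList)), ?_⟩
    rw [seg_mk', List.map_fst_zip hp'.le, List.map_snd_zip hp'.ge]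
    rw [← ha, ← hb]

end Stmt18

namespace Stmt18Alg

variable {k : Type*} [Field k] {M N P : Type*} [Monoid M] [Monoid N] [Monoid P]

variable (k M N) in
noncomputable def bT : Module.Basis (M × N) k
    (MonoidAlgebra k M ⊗[k] MonoidAlgebra k N) :=
  Module.Basis.tensorProduct
    (MonoidAlgebra.basis M k : Module.Basis M k (MonoidAlgebra k M))
    (MonoidAlgebra.basis N k : Module.Basis N k (MonoidAlgebra k N))

lemma bT_apply (p : M × N) :
    bT k M N p = MonoidAlgebra.of k M p.1 ⊗ₜ[k] MonoidAlgebra.of k N p.2 := by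
  rw [bT, Module.Basis.tensorProduct_apply']
  rfl

variable (f : P →* M × N)

noncomputable def gHom : P →* MonoidAlgebra k M ⊗[k] MonoidAlgebra k N where
  toFun := fun m => MonoidAlgebra.of k M (f m).1 ⊗ₜ[k] MonoidAlgebra.of k N (f m).2
  map_one' := by simp [Algebra.TensorProduct.one_def, MonoidAlgebra.one_def]
  map_mul' := by
    intro a b
    simp [map_mul, Algebra.TensorProduct.tmul_mul_tmul]

variable (k) in
noncomputable def phi : MonoidAlgebra k P →ₐ[k]
    MonoidAlgebra k M ⊗[k] MonoidAlgebra k N :=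
  MonoidAlgebra.lift k _ P (gHom f)

lemma phi_of (m : P) : phi k f (MonoidAlgebra.of k P m)
    = MonoidAlgebra.of k M (f m).1 ⊗ₜ[k] MonoidAlgebra.of k N (f m).2 := by
  rw [phi, MonoidAlgebra.lift_of]
  rfl

variable (k) in
noncomputable def psi : MonoidAlgebra k P →ₗ[k]
    MonoidAlgebra k M ⊗[k] MonoidAlgebra k N :=
  (Finsupp.linearCombination k (fun m => bT k M N (f m))).comp
    (MonoidAlgebra.coeffLinearEquiv k).toLinearMap

lemma phi_eq_psi : ⇑(phi k f) = ⇑(psi k f) := by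
  have h : (phi k f).toLinearMap = psi k f := by
    apply MonoidAlgebra.lhom_ext'
    intro a
    apply LinearMap.ext
    intro b
    show phi k f (MonoidAlgebra.single a b) = psi k f (MonoidAlgebra.single a b)
    have h1 : (MonoidAlgebra.single a b : MonoidAlgebra k P)
        = b • MonoidAlgebra.of k P a := by
      rw [MonoidAlgebra.of_apply, MonoidAlgebra.smul_single', mul_one]
    rw [h1, map_smul, phi_of, map_smul, psi, LinearMap.comp_apply]
    erw [Finsupp.linearCombination_single]
    rw [bT_apply, one_smul]
  calc ⇑(phi k f) = ⇑((phi k f).toLinearMap) := rfl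
    _ = ⇑(psi k f) := by rw [h]

lemma phi_inj (hf : Function.Injective f) : Function.Injective (phi k f) := by
  have : Function.Injective (psi k f) := by
    have li : LinearIndependent k (fun m => bT k M N (f m)) :=
      (bT k M N).linearIndependent.comp f hf
    exact (linearIndependent_iff_injective_finsuppLinearCombination.mp li).comp
      (MonoidAlgebra.coeffLinearEquiv k).injective
  rw [show ⇑(phi k f) = ⇑(psi k f) from phi_eq_psi f]
  exact this

lemma phi_range :
    Set.range (phi k f) =
      (Submodule.span k (Set.range fun m => bT k M N (f m)) :
        Submodule k (MonoidAlgebra k M ⊗[k] MonoidAlgebra k N)) := by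
  rw [show ⇑(phi k f) = ⇑(psi k f) from phi_eq_psi f]
  rw [← LinearMap.coe_range, psi,
    LinearMap.range_comp_of_range_eq_top _ (LinearEquiv.range _), Finsupp.range_linearCombination]

end Stmt18Alg

/-- Let `(X, r)` and `(Y, s)` be finite left nondegenerate idempotent braided sets, with
length functions `ℓX`, `ℓY` on `S(X, r)`, `S(Y, s)`. Then the assignment
`(x, y) ↦ ([x], [y])` on generators induces a well-defined injective monoid homomorphism
`𝔰 : S(X×Y, r*s) → S(X, r) × S(Y, s)` with image `{(u, v) : ℓX u = ℓY v}`; and for any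
field `k` it induces an injective algebra homomorphism
`A(k, X×Y, r*s) → A(k, X, r) ⊗ A(k, Y, s)` whose image is (the carrier of) the Segre
product `⊕ₘ Aₘ ⊗ Bₘ`, spanned by the `[u] ⊗ [v]` with `ℓX u = ℓY v`. -/
theorem stmt18 {X Y : Type*} [Finite X] [Finite Y]
    (r : X × X → X × X) (s : Y × Y → Y × Y)
    (hbr : IsBraided r) (hbs : IsBraided s)
    (hlndr : ∀ x : X, Function.Bijective fun y => (r (x, y)).1)
    (hlnds : ∀ a : Y, Function.Bijective fun b => (s (a, b)).1)
    (hir : r ∘ r = r) (his : s ∘ s = s)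
    (ℓX : (ybCon r).Quotient → ℕ)
    (hXone : ∀ x : X, ℓX ((ybCon r).mk' (FreeMonoid.of x)) = 1)
    (hXmul : ∀ a b, ℓX (a * b) = ℓX a + ℓX b)
    (ℓY : (ybCon s).Quotient → ℕ)
    (hYone : ∀ y : Y, ℓY ((ybCon s).mk' (FreeMonoid.of y)) = 1)
    (hYmul : ∀ a b, ℓY (a * b) = ℓY a + ℓY b)
    (k : Type*) [Field k] :
    (∃ seg : (ybCon (prodSol r s)).Quotient →* (ybCon r).Quotient × (ybCon s).Quotient,
      (∀ (x : X) (y : Y), seg ((ybCon (prodSol r s)).mk' (FreeMonoid.of (x, y)))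
          = ((ybCon r).mk' (FreeMonoid.of x), (ybCon s).mk' (FreeMonoid.of y))) ∧
      Function.Injective seg ∧
      Set.range seg = {p | ℓX p.1 = ℓY p.2}) ∧
    (∃ φ : MonoidAlgebra k (ybCon (prodSol r s)).Quotient →ₐ[k]
        (MonoidAlgebra k (ybCon r).Quotient ⊗[k] MonoidAlgebra k (ybCon s).Quotient),
      (∀ (x : X) (y : Y),
        φ (MonoidAlgebra.of k (ybCon (prodSol r s)).Quotient
            ((ybCon (prodSol r s)).mk' (FreeMonoid.of (x, y))))
          = MonoidAlgebra.of k (ybCon r).Quotient ((ybCon r).mk' (FreeMonoid.of x))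
            ⊗ₜ[k] MonoidAlgebra.of k (ybCon s).Quotient ((ybCon s).mk' (FreeMonoid.of y))) ∧
      Function.Injective φ ∧
      Set.range φ = (Submodule.span k
        {a | ∃ u v, ℓX u = ℓY v ∧
          a = MonoidAlgebra.of k (ybCon r).Quotient u
              ⊗ₜ[k] MonoidAlgebra.of k (ybCon s).Quotient v} :
        Submodule k (MonoidAlgebra k (ybCon r).Quotient ⊗[k]
          MonoidAlgebra k (ybCon s).Quotient))) := by
  classical
  have hbp : IsBraided (prodSol r s) := Stmt18.prod_braided hbr hbs
  have hip : prodSol r s ∘ prodSol r s = prodSol r s := Stmt18.prod_idem hir his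
  have hgen : ∀ (x : X) (y : Y),
      Stmt18.seg r s ((ybCon (prodSol r s)).mk' (FreeMonoid.of (x, y)))
        = ((ybCon r).mk' (FreeMonoid.of x), (ybCon s).mk' (FreeMonoid.of y)) :=
    fun x y => Stmt18.seg_mk' [(x, y)]
  have hinj : Function.Injective (Stmt18.seg r s) :=
    Stmt18.seg_injective hbr hbs hir his
  have hrange : Set.range (Stmt18.seg r s) = {p | ℓX p.1 = ℓY p.2} :=
    Stmt18.seg_range hbr hbs hir his ℓX hXone hXmul ℓY hYone hYmul
  refine ⟨⟨Stmt18.seg r s, hgen, hinj, hrange⟩, ?_⟩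
  refine ⟨Stmt18Alg.phi k (Stmt18.seg r s), ?_, Stmt18Alg.phi_inj _ hinj, ?_⟩
  · intro x y
    rw [Stmt18Alg.phi_of, hgen x y]
  · have hset : (Set.range fun m => Stmt18Alg.bT k (ybCon r).Quotient
        (ybCon s).Quotient (Stmt18.seg r s m)) =
        {a | ∃ u v, ℓX u = ℓY v ∧
          a = MonoidAlgebra.of k (ybCon r).Quotient u
              ⊗ₜ[k] MonoidAlgebra.of k (ybCon s).Quotient v} := by
      ext a
      constructor
      · rintro ⟨m, rfl⟩
        refine ⟨(Stmt18.seg r s m).1, (Stmt18.seg r s m).2, ?_, ?_⟩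
        · have hm : Stmt18.seg r s m ∈ Set.range (Stmt18.seg r s) :=
            Set.mem_range_self m
          rw [hrange] at hm
          exact hm
        · simp only [Stmt18Alg.bT_apply]
      · rintro ⟨u, v, hl, rfl⟩
        have hm : (u, v) ∈ Set.range (Stmt18.seg r s) := by
          rw [hrange]; exact hl
        obtain ⟨m, hm⟩ := hm
        exact ⟨m, by simp only [hm, Stmt18Alg.bT_apply]⟩
    rw [Stmt18Alg.phi_range, hset]
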